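/- arXiv:2506.19059 — 2 statements merged into one kernel-verified Lean document; each statement's English description precedes it below -/
import Mathlib

section
/- Let U ⊆ ℝⁿ be a nonempty, open, bounded set with diameter d > 0. For any R > d there exists a point y ∉ Ū such that min{|x−y| : x ∈ Ū} = R − d and max{|x−y| : x ∈ Ū} = R. -/
set_option maxHeartbeats 1000000

open Set Metric

theorem stmt_1 {n : ℕ} (U : Set (EuclideanSpace ℝ (Fin n)))
    (hne : U.Nonempty) (hopen : IsOpen U) (hbdd : Bornology.IsBounded U)
    (d : ℝ) (hd : d = Metric.diam U) (hdpos : 0 < d)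
    (R : ℝ) (hR : d < R) :
    ∃ y : EuclideanSpace ℝ (Fin n), y ∉ closure U ∧
      IsLeast ((fun x => dist x y) '' closure U) (R - d) ∧
      IsGreatest ((fun x => dist x y) '' closure U) R := by
  have hclos : IsCompact (closure U) := hbdd.isCompact_closure
  have hcne : (closure U).Nonempty := hne.closure
  have hcbdd : Bornology.IsBounded (closure U) := hbdd.closure
  have hdiamc : Metric.diam (closure U) = d := by rw [Metric.diam_closure, ← hd]
  have hcbdd' : Bornology.IsBounded (closure U) := hbdd.closure
  obtain ⟨⟨ξ1, ξ2⟩, hmem, hmax⟩ := (hclos.prod hclos).exists_isMaxOn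
    (f := fun p : EuclideanSpace ℝ (Fin n) × EuclideanSpace ℝ (Fin n) => dist p.1 p.2)
    (hcne.prod hcne) ((continuous_fst.dist continuous_snd).continuousOn)
  obtain ⟨h1, h2⟩ := Set.mem_prod.mp hmem
  have hd12 : dist ξ1 ξ2 = d := by
    rw [← hdiamc]
    refine le_antisymm (Metric.dist_le_diam_of_mem hcbdd' h1 h2) ?_
    refine Metric.diam_le_of_forall_dist_le (by positivity) ?_
    intro a ha b hb
    exact isMaxOn_iff.mp hmax (a, b) (Set.mk_mem_prod ha hb)
  set y := ξ1 + (R/d) • (ξ2 - ξ1) with hy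
  have hnorm : ‖ξ2 - ξ1‖ = d := by rw [← dist_eq_norm, dist_comm, hd12]
  have hRd : (0:ℝ) < R/d := div_pos (hdpos.trans hR) hdpos
  have hdy1 : dist ξ1 y = R := by
    rw [hy, dist_eq_norm]
    have : ξ1 - (ξ1 + (R/d) • (ξ2 - ξ1)) = -((R/d) • (ξ2 - ξ1)) := by abel
    rw [this, norm_neg, norm_smul, hnorm, Real.norm_eq_abs, abs_of_pos hRd,
      div_mul_cancel₀ _ hdpos.ne']
  have hdy2 : dist ξ2 y = R - d := by
    rw [hy, dist_eq_norm]
    have : ξ2 - (ξ1 + (R/d) • (ξ2 - ξ1)) = (1 - R/d) • (ξ2 - ξ1) := by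
      rw [sub_smul, one_smul]; abel
    rw [this, norm_smul, hnorm, Real.norm_eq_abs, abs_of_neg (by
      rw [sub_neg]
      exact (lt_div_iff₀ hdpos).mpr (by linarith)), neg_sub, sub_mul,
      div_mul_cancel₀ _ hdpos.ne', one_mul]
  have hub : ∀ x ∈ closure U, dist x y ≤ R := by
    intro x hxU
    calc dist x y ≤ dist x ξ2 + dist ξ2 y := dist_triangle _ _ _
      _ ≤ d + (R - d) := by
          gcongr
          · rw [← hdiamc]; exact Metric.dist_le_diam_of_mem hcbdd hxU h2
          · exact hdy2.le
      _ = R := by ring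
  have hlb : ∀ x ∈ closure U, R - d ≤ dist x y := by
    intro x hxU
    have h1x : dist ξ1 x ≤ d := by
      rw [← hdiamc]; exact Metric.dist_le_diam_of_mem hcbdd h1 hxU
    have := dist_triangle ξ1 x y
    rw [hdy1] at this
    linarith
  refine ⟨y, ?_, ⟨⟨ξ2, h2, hdy2⟩, ?_⟩, ⟨⟨ξ1, h1, hdy1⟩, ?_⟩⟩
  · intro hyU
    have : dist ξ1 y ≤ d := by
      rw [← hdiamc]; exact Metric.dist_le_diam_of_mem hcbdd h1 hyU
    rw [hdy1] at this; linarith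
  · rintro r ⟨x, hxU, rfl⟩; exact hlb x hxU
  · rintro r ⟨x, hxU, rfl⟩; exact hub x hxU
end

section
/- Let d, c₀ > 0, z : [0,∞) → ℝ increasing with z(t) → ∞ as t → ∞, Λ : [0,∞) → [0,∞) continuous, and define y(t) = ∫₀^t exp(−∫_{s+1}^t e^{−z(x)} dx) Λ(s) ds. If ∫₀^∞ e^{−z(x)} dx = ∞, then limsup_{t→∞} y(t) ≤ limsup_{t→∞} (Λ(t) e^{z(t)}). -/
open Filter Real intervalIntegral

theorem stmt_7 (z Λ : ℝ → ℝ)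
    (hzm : MonotoneOn z (Set.Ici (0:ℝ)))
    (hzc : Continuous z)
    (hztop : Tendsto z atTop atTop)
    (hΛc : Continuous Λ) (hΛnn : ∀ t, 0 ≤ Λ t)
    (hdiv : Tendsto (fun t => ∫ x in (0:ℝ)..t, Real.exp (-(z x))) atTop atTop)
    (y : ℝ → ℝ)
    (hy : ∀ t ≥ (0:ℝ), y t =
      ∫ s in (0:ℝ)..t, Real.exp (-(∫ x in (s + 1)..t, Real.exp (-(z x)))) * Λ s) :
    Filter.limsup (fun t => ((y t : ℝ) : EReal)) atTop ≤
      Filter.limsup (fun t => ((Λ t * Real.exp (z t) : ℝ) : EReal)) atTop := by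
  have hcz : Continuous fun x => Real.exp (-(z x)) := Real.continuous_exp.comp hzc.neg
  have hInt : ∀ a b : ℝ, IntervalIntegrable (fun x => Real.exp (-(z x)))
      MeasureTheory.volume a b := fun a b => hcz.intervalIntegrable a b
  set g : ℝ → ℝ := fun t => ∫ x in (0:ℝ)..t, Real.exp (-(z x)) with hgdef
  have hg' : ∀ t, HasDerivAt g (Real.exp (-(z t))) t := fun t =>
    intervalIntegral.integral_hasDerivAt_right (hInt 0 t)
      (hcz.stronglyMeasurableAtFilter _ _) hcz.continuousAt
  have hgc : Continuous g := by
    rw [continuous_iff_continuousAt]; exact fun t => (hg' t).continuousAt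
  have hgsub : ∀ a b : ℝ, (∫ x in a..b, Real.exp (-(z x))) = g b - g a := fun a b =>
    (intervalIntegral.integral_interval_sub_left (hInt 0 b) (hInt 0 a)).symm
  set F : ℝ → ℝ := fun t => ∫ s in (0:ℝ)..t, Real.exp (g (s + 1)) * Λ s with hFdef
  have hFcont : Continuous fun s => Real.exp (g (s + 1)) * Λ s :=
    (Real.continuous_exp.comp (hgc.comp (continuous_id.add continuous_const))).mul hΛc
  have hyF : ∀ t ≥ (0:ℝ), y t = Real.exp (-(g t)) * F t := by
    intro t ht
    rw [hy t ht, hFdef, ← intervalIntegral.integral_const_mul]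
    refine intervalIntegral.integral_congr fun s _ => ?_
    rw [hgsub, show -(g t - g (s + 1)) = g (s + 1) + -(g t) by ring, Real.exp_add]
    ring
  set Ls := Filter.limsup (fun t => ((Λ t * Real.exp (z t) : ℝ) : EReal)) atTop with hLs
  rw [← EReal.le_of_forall_lt_iff_le]
  intro M' hM'
  have hLs0 : (0 : EReal) ≤ Ls := by
    refine le_limsup_of_frequently_le (Frequently.of_forall fun t => ?_)
    exact_mod_cast mul_nonneg (hΛnn t) (Real.exp_nonneg _)
  have hM'0 : (0 : ℝ) < M' := by exact_mod_cast lt_of_le_of_lt hLs0 hM'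
  -- choose M real with Ls < M < M'
  have hLsfin : Ls ≠ ⊤ := ne_top_of_lt hM'
  obtain ⟨M, hLsM, hMM'⟩ : ∃ M : ℝ, Ls < (M : EReal) ∧ M < M' := by
    obtain ⟨c, hc1, hc2⟩ := EReal.exists_between_coe_real hM'
    exact ⟨c, hc1, by exact_mod_cast hc2⟩
  have hM0 : (0 : ℝ) < M := by exact_mod_cast lt_of_le_of_lt hLs0 hLsM
  obtain ⟨ε, hε0, hεM⟩ : ∃ ε : ℝ, 0 < ε ∧ M * Real.exp ε < M' := by
    refine ⟨Real.log (M' / M) / 2, by have := Real.log_pos ((one_lt_div hM0).2 hMM'); linarith, ?_⟩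
    have h1 : (1:ℝ) < M' / M := (one_lt_div hM0).2 hMM'
    have : Real.exp (Real.log (M' / M) / 2) < M' / M := by
      calc Real.exp (Real.log (M' / M) / 2) < Real.exp (Real.log (M' / M)) :=
            Real.exp_lt_exp.2 (by nlinarith [Real.log_pos h1])
        _ = M' / M := Real.exp_log (by positivity)
    calc M * Real.exp (Real.log (M' / M) / 2) < M * (M' / M) :=
          (mul_lt_mul_iff_right₀ hM0).2 this
      _ = M' := by field_simp
  -- choose T
  have h1 : ∀ᶠ s in atTop, Λ s * Real.exp (z s) ≤ M := by
    filter_upwards [Filter.eventually_lt_of_limsup_lt hLsM] with s hs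
    exact_mod_cast hs.le
  have h2 : ∀ᶠ s in atTop, Real.exp (-(z s)) ≤ ε := by
    filter_upwards [hztop.eventually_ge_atTop (-Real.log ε)] with s hs
    calc Real.exp (-(z s)) ≤ Real.exp (Real.log ε) := Real.exp_le_exp.2 (by linarith)
      _ = ε := Real.exp_log hε0
  obtain ⟨T, hT⟩ := ((h1.and h2).and (eventually_ge_atTop (0:ℝ))).exists_forall_of_atTop
  have hT0 : (0:ℝ) ≤ T := (hT T le_rfl).2
  -- key pointwise bound
  have hpt : ∀ s, T ≤ s → Real.exp (g (s + 1)) * Λ s ≤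
      (M * Real.exp ε) * (Real.exp (g s) * Real.exp (-(z s))) := by
    intro s hs
    have hs0 : (0:ℝ) ≤ s := hT0.trans hs
    have hΛb : Λ s ≤ M * Real.exp (-(z s)) := by
      have := (hT s hs).1.1
      have h3 := mul_le_mul_of_nonneg_right this (Real.exp_nonneg (-(z s)))
      rwa [mul_assoc, ← Real.exp_add, add_neg_cancel, Real.exp_zero, mul_one] at h3
    have hgb : g (s + 1) ≤ g s + ε := by
      have hsub : g (s + 1) - g s = ∫ x in s..(s + 1), Real.exp (-(z x)) := (hgsub s (s+1)).symm
      have hle : (∫ x in s..(s + 1), Real.exp (-(z x))) ≤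
          ∫ _x in s..(s + 1), Real.exp (-(z s)) := by
        apply intervalIntegral.integral_mono_on (by linarith) (hInt s (s+1))
          (intervalIntegrable_const)
        intro x hx
        exact Real.exp_le_exp.2 (neg_le_neg (hzm hs0 (hs0.trans hx.1) hx.1))
      have : (∫ _x in s..(s + 1), Real.exp (-(z s))) = Real.exp (-(z s)) := by simp
      have hεs := (hT s hs).1.2
      linarith [hsub ▸ hle.trans (this.le.trans (le_of_eq rfl)) , hεs]
    have hexp : Real.exp (g (s + 1)) ≤ Real.exp ε * Real.exp (g s) := by
      rw [← Real.exp_add]; exact Real.exp_le_exp.2 (by linarith)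
    calc Real.exp (g (s + 1)) * Λ s ≤ (Real.exp ε * Real.exp (g s)) * (M * Real.exp (-(z s))) :=
          mul_le_mul hexp hΛb (hΛnn s) (by positivity)
      _ = (M * Real.exp ε) * (Real.exp (g s) * Real.exp (-(z s))) := by ring
  -- integral bound for t ≥ T
  have hFb : ∀ t, T ≤ t → F t ≤ F T + (M * Real.exp ε) * (Real.exp (g t) - Real.exp (g T)) := by
    intro t ht
    have hsplit : F t - F T = ∫ s in T..t, Real.exp (g (s + 1)) * Λ s :=
      (intervalIntegral.integral_interval_sub_left (hFcont.intervalIntegrable 0 t)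
        (hFcont.intervalIntegrable 0 T))
    have hftc : (∫ s in T..t, (M * Real.exp ε) * (Real.exp (g s) * Real.exp (-(z s)))) =
        (M * Real.exp ε) * (Real.exp (g t) - Real.exp (g T)) := by
      rw [intervalIntegral.integral_const_mul]
      congr 1
      exact intervalIntegral.integral_eq_sub_of_hasDerivAt
        (fun s _ => (hg' s).exp)
        (((Real.continuous_exp.comp hgc).mul hcz).intervalIntegrable T t)
    have hmono : (∫ s in T..t, Real.exp (g (s + 1)) * Λ s) ≤
        ∫ s in T..t, (M * Real.exp ε) * (Real.exp (g s) * Real.exp (-(z s))) := by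
      apply intervalIntegral.integral_mono_on ht (hFcont.intervalIntegrable T t)
        ((continuous_const.mul ((Real.continuous_exp.comp hgc).mul hcz)).intervalIntegrable T t)
      intro s hs
      exact hpt s hs.1
    linarith [hsplit ▸ hmono.trans hftc.le]
  -- eventual bound on y
  have hyb : ∀ᶠ t in atTop, y t ≤ Real.exp (-(g t)) * F T + M * Real.exp ε := by
    filter_upwards [eventually_ge_atTop T, eventually_ge_atTop (0:ℝ)] with t ht ht0
    rw [hyF t ht0]
    have h4 := hFb t ht
    have h5 : Real.exp (-(g t)) * F t ≤
        Real.exp (-(g t)) * (F T + (M * Real.exp ε) * (Real.exp (g t) - Real.exp (g T))) :=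
      mul_le_mul_of_nonneg_left h4 (Real.exp_nonneg _)
    have h6 : Real.exp (-(g t)) * Real.exp (g t) = 1 := by
      rw [← Real.exp_add, neg_add_cancel, Real.exp_zero]
    have h7 : Real.exp (-(g t)) * (F T + (M * Real.exp ε) * (Real.exp (g t) - Real.exp (g T)))
        = Real.exp (-(g t)) * F T
          + (M * Real.exp ε) * (Real.exp (-(g t)) * Real.exp (g t))
          - (M * Real.exp ε) * (Real.exp (-(g t)) * Real.exp (g T)) := by ring
    rw [h6] at h7
    have h8 : 0 ≤ (M * Real.exp ε) * (Real.exp (-(g t)) * Real.exp (g T)) := by positivity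
    linarith
  -- RHS tends to M e^ε < M'
  have hgt : Tendsto (fun t => Real.exp (-(g t))) atTop (nhds 0) :=
    Real.tendsto_exp_atBot.comp (Filter.tendsto_neg_atBot_iff.mpr hdiv)
  have htend : Tendsto (fun t => Real.exp (-(g t)) * F T + M * Real.exp ε) atTop
      (nhds (0 * F T + M * Real.exp ε)) :=
    ((hgt.mul_const (F T)).add tendsto_const_nhds)
  have hlt : ∀ᶠ t in atTop, Real.exp (-(g t)) * F T + M * Real.exp ε < M' := by
    have : (0 : ℝ) * F T + M * Real.exp ε < M' := by simpa using hεM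
    exact htend.eventually_lt_const this |>.mono (fun t h => h) |>.mono (fun t h => h)
  have hfin : ∀ᶠ t in atTop, ((y t : ℝ) : EReal) ≤ (M' : EReal) := by
    filter_upwards [hyb, hlt] with t h1 h2
    exact_mod_cast (h1.trans h2.le)
  exact limsup_le_of_le (by isBoundedDefault) hfin
end
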